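/- Let f_4 be the Musin polynomial of degree 9 (for n = 4). For any finite set X = {x_1,...,x_M} of points on the unit sphere S³ ⊂ ℝ⁴, the sum S(X) = ∑_{i=1}^M ∑_{j=1}^M f_4(⟨x_i, x_j⟩) satisfies S(X) ≥ M². -/

import Mathlib

open RealInnerProductSpace

/-- Musin's polynomial `f_4` for the kissing number problem in dimension 4. -/
noncomputable def f4 (t : ℝ) : ℝ :=
  (1344 / 25) * t ^ 9 - (2688 / 25) * t ^ 7 + (1764 / 25) * t ^ 5
    + (2048 / 125) * t ^ 4 - (1229 / 125) * t ^ 3 - (516 / 125) * t ^ 2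
    - (217 / 500) * t - 2 / 125

open Polynomial BigOperators Quaternion Matrix RealInnerProductSpace

noncomputable def Sm (k : ℕ) (M : Matrix (Fin 2) (Fin 2) ℂ) :
    Matrix (Fin (k+1)) (Fin (k+1)) ℂ :=
  fun a b => (((C (M 0 0) * X + C (M 1 0)) ^ (a:ℕ)) *
      ((C (M 0 1) * X + C (M 1 1)) ^ (k - (a:ℕ)))).coeff (b:ℕ)

lemma Sm_natDegree_le (k : ℕ) (M : Matrix (Fin 2) (Fin 2) ℂ) (a : Fin (k+1)) :
    (((C (M 0 0) * X + C (M 1 0)) ^ (a:ℕ)) *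
      ((C (M 0 1) * X + C (M 1 1)) ^ (k - (a:ℕ)))).natDegree ≤ k := by
  apply (natDegree_mul_le).trans
  have h1 : ((C (M 0 0) * X + C (M 1 0)) ^ (a:ℕ)).natDegree ≤ (a:ℕ) := by
    apply (natDegree_pow_le).trans
    have := natDegree_linear_le (a := M 0 0) (b := M 1 0)
    nlinarith [this]
  have h2 : ((C (M 0 1) * X + C (M 1 1)) ^ (k - (a:ℕ))).natDegree ≤ k - (a:ℕ) := by
    apply (natDegree_pow_le).trans
    have := natDegree_linear_le (a := M 0 1) (b := M 1 1)
    nlinarith [this]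
  have : (a:ℕ) ≤ k := Nat.lt_succ_iff.mp a.isLt
  omega

lemma Sm_expand (k : ℕ) (M : Matrix (Fin 2) (Fin 2) ℂ) (a : Fin (k+1))
    (Z W : ℂ) (hW : W ≠ 0) :
    (M 0 0 * Z + M 1 0 * W) ^ (a:ℕ) * (M 0 1 * Z + M 1 1 * W) ^ (k - (a:ℕ))
      = ∑ b : Fin (k+1), Sm k M a b * Z ^ (b:ℕ) * W ^ (k - (b:ℕ)) := by
  set Q := ((C (M 0 0) * X + C (M 1 0)) ^ (a:ℕ)) *
      ((C (M 0 1) * X + C (M 1 1)) ^ (k - (a:ℕ))) with hQ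
  have hdeg : Q.natDegree < k + 1 := Nat.lt_succ_of_le (Sm_natDegree_le k M a)
  have heval : Q.eval (Z / W) = ∑ b ∈ Finset.range (k+1), Q.coeff b * (Z / W) ^ b :=
    eval_eq_sum_range' hdeg _
  have hWk : W ^ k * Q.eval (Z / W)
      = (M 0 0 * Z + M 1 0 * W) ^ (a:ℕ) * (M 0 1 * Z + M 1 1 * W) ^ (k - (a:ℕ)) := by
    have ha : (a:ℕ) + (k - (a:ℕ)) = k := Nat.add_sub_cancel' (Nat.lt_succ_iff.mp a.isLt)
    rw [hQ]
    simp only [eval_mul, eval_pow, eval_add, eval_mul, eval_C, eval_X]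
    have hw : W ^ k = W ^ (a:ℕ) * W ^ (k - (a:ℕ)) := by rw [← pow_add, ha]
    rw [hw]
    have e1 : W ^ (a:ℕ) * (M 0 0 * (Z / W) + M 1 0) ^ (a:ℕ)
        = (M 0 0 * Z + M 1 0 * W) ^ (a:ℕ) := by
      rw [← mul_pow]; congr 1; field_simp
    have e2 : W ^ (k - (a:ℕ)) * (M 0 1 * (Z / W) + M 1 1) ^ (k - (a:ℕ))
        = (M 0 1 * Z + M 1 1 * W) ^ (k - (a:ℕ)) := by
      rw [← mul_pow]; congr 1; field_simp
    calc W ^ (a:ℕ) * W ^ (k - (a:ℕ)) * ((M 0 0 * (Z/W) + M 1 0) ^ (a:ℕ) * (M 0 1 * (Z/W) + M 1 1) ^ (k - (a:ℕ)))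
        = (W ^ (a:ℕ) * (M 0 0 * (Z/W) + M 1 0) ^ (a:ℕ)) * (W ^ (k - (a:ℕ)) * (M 0 1 * (Z/W) + M 1 1) ^ (k - (a:ℕ))) := by ring
      _ = _ := by rw [e1, e2]
  rw [← hWk, heval, Finset.mul_sum]
  rw [← Fin.sum_univ_eq_sum_range (fun b => W ^ k * (Q.coeff b * (Z / W) ^ b)) (k+1)]
  apply Finset.sum_congr rfl
  intro b _
  have hb : (b:ℕ) ≤ k := Nat.lt_succ_iff.mp b.isLt
  have : W ^ k = W ^ (k - (b:ℕ)) * W ^ (b:ℕ) := by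
    rw [← pow_add]; congr 1; omega
  rw [this, div_pow, Sm]
  field_simp
  ring

-- coefficient extraction from equality of finite power sums on an infinite set
lemma coeff_ext {k : ℕ} (f g : Fin (k+1) → ℂ) (s : Set ℂ) (hs : s.Infinite)
    (h : ∀ Z ∈ s, ∑ b : Fin (k+1), f b * Z ^ (b:ℕ) = ∑ b : Fin (k+1), g b * Z ^ (b:ℕ)) :
    f = g := by
  have hpq : (∑ b : Fin (k+1), C (f b) * X ^ (b:ℕ)) = ∑ b : Fin (k+1), C (g b) * X ^ (b:ℕ) := by
    apply Polynomial.eq_of_infinite_eval_eq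
    apply hs.mono
    intro Z hZ
    simp only [Set.mem_setOf_eq, eval_finset_sum, eval_mul, eval_pow, eval_C, eval_X]
    exact h Z hZ
  funext c
  have := congrArg (fun p => Polynomial.coeff p (c:ℕ)) hpq
  simpa [finset_sum_coeff, coeff_C_mul, coeff_X_pow, Fin.val_eq_val,
    Finset.sum_ite_eq' , eq_comm] using this

lemma coeff_ext' {k : ℕ} (f g : Fin (k+1) → ℂ)
    (h : ∀ Z : ℂ, ∑ b : Fin (k+1), f b * Z ^ (b:ℕ) = ∑ b : Fin (k+1), g b * Z ^ (b:ℕ)) :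
    f = g :=
  coeff_ext f g Set.univ Set.infinite_univ (fun Z _ => h Z)

-- generating function: ∑_a C(k,a) (∑_b Sm M a b z^b) Z^a = (M00 zZ + M10 Z + M01 z + M11)^k
lemma Sm_gen (k : ℕ) (M : Matrix (Fin 2) (Fin 2) ℂ) (z Z : ℂ) :
    ∑ a : Fin (k+1), ((k.choose (a:ℕ) : ℂ) * ∑ b : Fin (k+1), Sm k M a b * z ^ (b:ℕ)) * Z ^ (a:ℕ)
      = (M 0 0 * z * Z + M 1 0 * Z + M 0 1 * z + M 1 1) ^ k := by
  have hadd := add_pow ((M 0 0 * z + M 1 0) * Z) (M 0 1 * z + M 1 1) k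
  rw [← Fin.sum_univ_eq_sum_range
    (fun a => ((M 0 0 * z + M 1 0) * Z) ^ a * (M 0 1 * z + M 1 1) ^ (k - a) * (k.choose a : ℂ)) (k+1)] at hadd
  have : ∀ a : Fin (k+1),
      ((M 0 0 * z + M 1 0) * Z) ^ (a:ℕ) * (M 0 1 * z + M 1 1) ^ (k - (a:ℕ)) * (k.choose (a:ℕ) : ℂ)
      = ((k.choose (a:ℕ) : ℂ) * ∑ b : Fin (k+1), Sm k M a b * z ^ (b:ℕ)) * Z ^ (a:ℕ) := by
    intro a
    have e := Sm_expand k M a z 1 one_ne_zero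
    simp only [mul_one, one_pow] at e
    rw [mul_pow, ← e]
    ring
  rw [Finset.sum_congr rfl (fun a _ => this a)] at hadd
  rw [← hadd]
  ring_nf

lemma Sm_transpose (k : ℕ) (M : Matrix (Fin 2) (Fin 2) ℂ) (a b : Fin (k+1)) :
    (k.choose (a:ℕ) : ℂ) * Sm k M a b = (k.choose (b:ℕ) : ℂ) * Sm k M.transpose b a := by
  have step1 : ∀ z : ℂ, (fun a : Fin (k+1) => (k.choose (a:ℕ) : ℂ) * ∑ b : Fin (k+1), Sm k M a b * z ^ (b:ℕ))
      = (fun a : Fin (k+1) => ∑ b : Fin (k+1), ((k.choose (b:ℕ) : ℂ) * Sm k M.transpose b a) * z ^ (b:ℕ)) := by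
    intro z
    apply coeff_ext'
    intro Z
    have g1 := Sm_gen k M z Z
    have g2 := Sm_gen k M.transpose Z z
    simp only [Matrix.transpose_apply] at g2
    have : ∑ a : Fin (k+1), ((k.choose (a:ℕ) : ℂ) * ∑ b : Fin (k+1), Sm k M.transpose a b * Z ^ (b:ℕ)) * z ^ (a:ℕ)
        = ∑ b : Fin (k+1), (∑ a : Fin (k+1), ((k.choose (a:ℕ) : ℂ) * Sm k M.transpose a b) * z ^ (a:ℕ)) * Z ^ (b:ℕ) := by
      simp only [Finset.sum_mul, Finset.mul_sum]
      rw [Finset.sum_comm]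
      apply Finset.sum_congr rfl; intro a _
      apply Finset.sum_congr rfl; intro c _; ring
    rw [g1, ← this]
    rw [g2]
    ring_nf
  have key : ∀ a : Fin (k+1), (fun b : Fin (k+1) => (k.choose (a:ℕ) : ℂ) * Sm k M a b)
      = (fun b : Fin (k+1) => (k.choose (b:ℕ) : ℂ) * Sm k M.transpose b a) := by
    intro a
    apply coeff_ext'
    intro z
    have := congrFun (step1 z) a
    beta_reduce at this
    rw [← this, Finset.mul_sum]
    apply Finset.sum_congr rfl; intro c _; ring
  exact congrFun (key a) b

lemma Sm_mul (k : ℕ) (M N : Matrix (Fin 2) (Fin 2) ℂ)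
    (hN : N 0 1 ≠ 0 ∨ N 1 1 ≠ 0) :
    Sm k (N * M) = Sm k M * Sm k N := by
  ext a c
  have hset : {Z : ℂ | N 0 1 * Z + N 1 1 ≠ 0}.Infinite := by
    rcases eq_or_ne (N 0 1) 0 with h0 | h0
    · have : {Z : ℂ | N 0 1 * Z + N 1 1 ≠ 0} = Set.univ := by
        ext Z; simp [h0]; tauto
      rw [this]; exact Set.infinite_univ
    · have hsub : {(- N 1 1 / N 0 1)}ᶜ ⊆ {Z : ℂ | N 0 1 * Z + N 1 1 ≠ 0} := by
        intro Z hZ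
        simp only [Set.mem_compl_iff, Set.mem_singleton_iff] at hZ
        simp only [Set.mem_setOf_eq]
        intro hc
        apply hZ
        field_simp
        linear_combination hc
      exact ((Set.finite_singleton _).infinite_compl).mono hsub
  have key : (fun c : Fin (k+1) => Sm k (N * M) a c)
      = (fun c : Fin (k+1) => ∑ b : Fin (k+1), Sm k M a b * Sm k N b c) := by
    apply coeff_ext _ _ _ hset
    intro Z hZ
    simp only [Set.mem_setOf_eq] at hZ
    have e1 := Sm_expand k (N * M) a Z 1 one_ne_zero
    have e2 := Sm_expand k M a (N 0 0 * Z + N 1 0 * 1) (N 0 1 * Z + N 1 1 * 1) (by simpa using hZ)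
    have e3 : ∀ b : Fin (k+1),
        (N 0 0 * Z + N 1 0 * 1) ^ (b:ℕ) * (N 0 1 * Z + N 1 1 * 1) ^ (k - (b:ℕ))
        = ∑ c : Fin (k+1), Sm k N b c * Z ^ (c:ℕ) * 1 ^ (k - (c:ℕ)) :=
      fun b => Sm_expand k N b Z 1 one_ne_zero
    have emat : ((N * M) 0 0 * Z + (N * M) 1 0 * 1) = M 0 0 * (N 0 0 * Z + N 1 0 * 1) + M 1 0 * (N 0 1 * Z + N 1 1 * 1) := by
      simp [Matrix.mul_apply, Fin.sum_univ_two]; ring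
    have emat2 : ((N * M) 0 1 * Z + (N * M) 1 1 * 1) = M 0 1 * (N 0 0 * Z + N 1 0 * 1) + M 1 1 * (N 0 1 * Z + N 1 1 * 1) := by
      simp [Matrix.mul_apply, Fin.sum_univ_two]; ring
    calc ∑ c : Fin (k+1), Sm k (N * M) a c * Z ^ (c:ℕ)
        = ∑ c : Fin (k+1), Sm k (N * M) a c * Z ^ (c:ℕ) * 1 ^ (k - (c:ℕ)) := by simp
      _ = ((N * M) 0 0 * Z + (N * M) 1 0 * 1) ^ (a:ℕ) * ((N * M) 0 1 * Z + (N * M) 1 1 * 1) ^ (k - (a:ℕ)) := (e1).symm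
      _ = (M 0 0 * (N 0 0 * Z + N 1 0 * 1) + M 1 0 * (N 0 1 * Z + N 1 1 * 1)) ^ (a:ℕ)
          * (M 0 1 * (N 0 0 * Z + N 1 0 * 1) + M 1 1 * (N 0 1 * Z + N 1 1 * 1)) ^ (k - (a:ℕ)) := by rw [emat, emat2]
      _ = ∑ b : Fin (k+1), Sm k M a b * (N 0 0 * Z + N 1 0 * 1) ^ (b:ℕ) * (N 0 1 * Z + N 1 1 * 1) ^ (k - (b:ℕ)) := e2
      _ = ∑ b : Fin (k+1), Sm k M a b * ∑ c : Fin (k+1), Sm k N b c * Z ^ (c:ℕ) * 1 ^ (k - (c:ℕ)) := by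
          apply Finset.sum_congr rfl; intro b _; rw [mul_assoc, e3 b]
      _ = ∑ c : Fin (k+1), (∑ b : Fin (k+1), Sm k M a b * Sm k N b c) * Z ^ (c:ℕ) := by
          simp only [Finset.mul_sum, Finset.sum_mul, one_pow, mul_one]
          rw [Finset.sum_comm]
          apply Finset.sum_congr rfl; intro c _
          apply Finset.sum_congr rfl; intro b _; ring
  have := congrFun key c
  simpa [Matrix.mul_apply] using this

lemma Sm_conj (k : ℕ) (M : Matrix (Fin 2) (Fin 2) ℂ) (a b : Fin (k+1)) :
    Sm k (M.map (starRingEnd ℂ)) a b = (starRingEnd ℂ) (Sm k M a b) := by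
  unfold Sm
  simp only [Matrix.map_apply]
  rw [← Polynomial.coeff_map]
  congr 1
  simp only [Polynomial.map_mul, Polynomial.map_pow, Polynomial.map_add, Polynomial.map_C,
    Polynomial.map_X]

lemma Sm_diag (k : ℕ) (M : Matrix (Fin 2) (Fin 2) ℂ) (h01 : M 0 1 = 0) (h10 : M 1 0 = 0)
    (a b : Fin (k+1)) :
    Sm k M a b = if a = b then M 0 0 ^ (a:ℕ) * M 1 1 ^ (k - (a:ℕ)) else 0 := by
  unfold Sm
  rw [h01, h10]
  simp only [map_zero, add_zero, zero_mul, zero_add, mul_pow, ← Polynomial.C_pow, ← Polynomial.C_mul]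
  rw [mul_right_comm, ← Polynomial.C_mul, Polynomial.coeff_C_mul, Polynomial.coeff_X_pow]
  rcases eq_or_ne a b with h | h
  · simp [h]
  · rw [if_neg (fun hc : (b:ℕ) = (a:ℕ) => h (Fin.ext hc.symm)), if_neg h, mul_zero]

noncomputable def Aq (q : ℍ[ℝ]) : Matrix (Fin 2) (Fin 2) ℂ :=
  !![⟨q.re, q.imI⟩, ⟨q.imJ, q.imK⟩; ⟨-q.imJ, q.imK⟩, ⟨q.re, -q.imI⟩]

@[simp] lemma Aq00 (q : ℍ[ℝ]) : Aq q 0 0 = ⟨q.re, q.imI⟩ := rfl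
@[simp] lemma Aq01 (q : ℍ[ℝ]) : Aq q 0 1 = ⟨q.imJ, q.imK⟩ := rfl
@[simp] lemma Aq10 (q : ℍ[ℝ]) : Aq q 1 0 = ⟨-q.imJ, q.imK⟩ := rfl
@[simp] lemma Aq11 (q : ℍ[ℝ]) : Aq q 1 1 = ⟨q.re, -q.imI⟩ := rfl

lemma Aq_mul (p q : ℍ[ℝ]) : Aq (p * q) = Aq p * Aq q := by
  ext i j
  fin_cases i <;> fin_cases j <;>
    · simp only [Matrix.mul_apply, Fin.sum_univ_two, Aq00, Aq01, Aq10, Aq11,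
        Quaternion.re_mul, Quaternion.imI_mul, Quaternion.imJ_mul, Quaternion.imK_mul]
      apply Complex.ext <;> simp [Complex.mul_re, Complex.mul_im] <;> ring

lemma Aq_star (q : ℍ[ℝ]) : Aq (star q) = ((Aq q).map (starRingEnd ℂ)).transpose := by
  ext i j
  fin_cases i <;> fin_cases j <;>
    · simp only [Matrix.transpose_apply, Matrix.map_apply, Aq00, Aq01, Aq10, Aq11,
        Quaternion.re_star, Quaternion.imI_star, Quaternion.imJ_star, Quaternion.imK_star]
      apply Complex.ext <;> simp

lemma Aq_ne (q : ℍ[ℝ]) (hq : q ≠ 0) : Aq q 0 1 ≠ 0 ∨ Aq q 1 1 ≠ 0 := by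
  by_contra h
  push_neg at h
  obtain ⟨h1, h2⟩ := h
  apply hq
  rw [Complex.ext_iff] at h1 h2
  simp only [Aq01, Aq11, Complex.zero_re, Complex.zero_im, neg_eq_zero] at h1 h2
  ext <;> simp [h1.1, h1.2, h2.1, h2.2]

lemma Aq_real (r : ℝ) : Aq (r : ℍ[ℝ]) = !![(r:ℂ), 0; 0, (r:ℂ)] := by
  ext i j
  fin_cases i <;> fin_cases j <;>
    · simp only [Aq00, Aq01, Aq10, Aq11, Quaternion.re_coe, Quaternion.imI_coe,
        Quaternion.imJ_coe, Quaternion.imK_coe]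
      apply Complex.ext <;> simp

noncomputable def myU : ℕ → ℝ → ℝ
  | 0, _ => 1
  | 1, t => 2 * t
  | (n+2), t => 2 * t * myU (n+1) t - myU n t

lemma myU_sum (α : ℂ) (h : α * (starRingEnd ℂ) α = 1) :
    ∀ k : ℕ, ∑ a ∈ Finset.range (k+1), α ^ a * ((starRingEnd ℂ) α) ^ (k - a)
      = ((myU k α.re : ℝ) : ℂ) := by
  have peel_top : ∀ k : ℕ, ∑ a ∈ Finset.range (k+2), α ^ a * ((starRingEnd ℂ) α) ^ (k+1-a)
      = (starRingEnd ℂ) α * (∑ a ∈ Finset.range (k+1), α ^ a * ((starRingEnd ℂ) α) ^ (k-a)) + α ^ (k+1) := by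
    intro k
    rw [Finset.sum_range_succ, Finset.mul_sum]
    congr 1
    · apply Finset.sum_congr rfl
      intro a ha
      simp only [Finset.mem_range] at ha
      have : k + 1 - a = (k - a) + 1 := by omega
      rw [this, pow_succ]
      ring
    · simp
  have peel_bot : ∀ k : ℕ, ∑ a ∈ Finset.range (k+2), α ^ a * ((starRingEnd ℂ) α) ^ (k+1-a)
      = α * (∑ a ∈ Finset.range (k+1), α ^ a * ((starRingEnd ℂ) α) ^ (k-a)) + ((starRingEnd ℂ) α) ^ (k+1) := by
    intro k
    rw [Finset.sum_range_succ', Finset.mul_sum]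
    congr 1
    · apply Finset.sum_congr rfl
      intro a ha
      simp only [Finset.mem_range] at ha
      have : k + 1 - (a+1) = k - a := by omega
      rw [this, pow_succ]
      ring
    · simp
  intro k
  induction k using Nat.twoStepInduction with
  | zero => simp [myU]
  | one =>
    simp only [myU]
    have e : ∑ a ∈ Finset.range 2, α ^ a * ((starRingEnd ℂ) α) ^ (1-a) = α + (starRingEnd ℂ) α := by
      simp [Finset.sum_range_succ, add_comm]
    rw [e, Complex.add_conj]
  | more n ih1 ih2 =>
    have e1 := peel_top (n+1)
    have e2 := peel_top n
    simp only [myU]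
    push_cast
    rw [← ih1, ← ih2]
    have hre : ((2:ℂ) * (α.re:ℂ)) = α + (starRingEnd ℂ) α := by
      rw [Complex.add_conj]; push_cast; ring
    set S0 := ∑ a ∈ Finset.range (n+1), α ^ a * ((starRingEnd ℂ) α) ^ (n - a) with hS0
    set S1 := ∑ a ∈ Finset.range (n+2), α ^ a * ((starRingEnd ℂ) α) ^ (n + 1 - a) with hS1
    rw [show n + 1 + 1 = n + 2 by rfl] at e1
    linear_combination e1 - α * e2 - S0 * h - S1 * hre


lemma trace_Sm_diag (k : ℕ) (u : ℍ[ℝ]) (hJ : u.imJ = 0) (hK : u.imK = 0)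
    (h1 : u.re ^ 2 + u.imI ^ 2 = 1) :
    Matrix.trace (Sm k (Aq u)) = ((myU k u.re : ℝ) : ℂ) := by
  have h01 : Aq u 0 1 = 0 := by rw [Aq01, hJ, hK]; rfl
  have h10 : Aq u 1 0 = 0 := by rw [Aq10, hJ, hK]; simp; rfl
  have hconj : Aq u 1 1 = (starRingEnd ℂ) (Aq u 0 0) := by
    rw [Aq00, Aq11]; apply Complex.ext <;> simp
  have hα : Aq u 0 0 * (starRingEnd ℂ) (Aq u 0 0) = 1 := by
    rw [Complex.mul_conj]
    rw [Complex.normSq_apply]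
    norm_cast
    simpa [sq] using h1
  unfold Matrix.trace
  calc ∑ a, Matrix.diag (Sm k (Aq u)) a
      = ∑ a : Fin (k+1), (Aq u 0 0) ^ (a:ℕ) * ((starRingEnd ℂ) (Aq u 0 0)) ^ (k - (a:ℕ)) := by
        apply Finset.sum_congr rfl; intro a _
        simp [Matrix.diag, Sm_diag k (Aq u) h01 h10 a a, hconj]
    _ = ∑ a ∈ Finset.range (k+1), (Aq u 0 0) ^ a * ((starRingEnd ℂ) (Aq u 0 0)) ^ (k - a) :=
        Fin.sum_univ_eq_sum_range (fun a => (Aq u 0 0) ^ a * ((starRingEnd ℂ) (Aq u 0 0)) ^ (k - a)) (k+1)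
    _ = ((myU k (Aq u 0 0).re : ℝ) : ℂ) := myU_sum _ hα k
    _ = ((myU k u.re : ℝ) : ℂ) := rfl

lemma Sm_real (k : ℕ) (r : ℝ) : Sm k (Aq (r : ℍ[ℝ])) = ((r:ℂ)^k) • 1 := by
  have h01 : Aq (r : ℍ[ℝ]) 0 1 = 0 := by
    rw [Aq01]; simp; rfl
  have h10 : Aq (r : ℍ[ℝ]) 1 0 = 0 := by
    rw [Aq10]; simp; rfl
  ext a b
  rw [Sm_diag k _ h01 h10 a b]
  have h00 : Aq (r : ℍ[ℝ]) 0 0 = (r : ℂ) := by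
    rw [Aq00]; apply Complex.ext <;> simp
  have h11 : Aq (r : ℍ[ℝ]) 1 1 = (r : ℂ) := by
    rw [Aq11]; apply Complex.ext <;> simp
  rw [h00, h11, ← pow_add]
  have ha : (a:ℕ) + (k - (a:ℕ)) = k := Nat.add_sub_cancel' (Nat.lt_succ_iff.mp a.isLt)
  rw [ha]
  simp [Matrix.smul_apply, Matrix.one_apply]

lemma chi_eq (k : ℕ) (u : ℍ[ℝ]) (hu : normSq u = 1) :
    Matrix.trace (Sm k (Aq u)) = ((myU k u.re : ℝ) : ℂ) := by
  have hn1 : u.re^2 + u.imI^2 + u.imJ^2 + u.imK^2 = 1 := by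
    rw [← Quaternion.normSq_def']; exact hu
  have hune : u ≠ 0 := by
    intro h; rw [h] at hu; simp at hu
  by_cases hd : u.imJ = 0 ∧ u.imK = 0
  · exact trace_Sm_diag k u hd.1 hd.2 (by nlinarith [hd.1, hd.2])
  · set s := Real.sqrt (u.imI^2 + u.imJ^2 + u.imK^2) with hs
    have hs2 : s^2 = u.imI^2 + u.imJ^2 + u.imK^2 := Real.sq_sqrt (by positivity)
    have hcs : u.re^2 + s^2 = 1 := by rw [hs2]; linarith
    set d : ℍ[ℝ] := ⟨u.re, s, 0, 0⟩ with hdq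
    set v : ℍ[ℝ] := ⟨s + u.imI, 0, -u.imK, u.imJ⟩ with hvq
    have hv : v ≠ 0 := by
      intro h
      apply hd
      have hj := congrArg QuaternionAlgebra.imK h
      have hk := congrArg QuaternionAlgebra.imJ h
      simp [hvq] at hj hk
      exact ⟨hj, by linarith [hk]⟩
    have hvd : v * d = u * v := by
      ext
      · rw [Quaternion.re_mul, Quaternion.re_mul]; simp only [hdq, hvq]; ring
      · rw [Quaternion.imI_mul, Quaternion.imI_mul]; simp only [hdq, hvq]; nlinarith [hs2]
      · rw [Quaternion.imJ_mul, Quaternion.imJ_mul]; simp only [hdq, hvq]; ring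
      · rw [Quaternion.imK_mul, Quaternion.imK_mul]; simp only [hdq, hvq]; ring
    -- matrix identities
    have e1 : Sm k (Aq d) * Sm k (Aq v) = Sm k (Aq v) * Sm k (Aq u) := by
      have l : Sm k (Aq (v * d)) = Sm k (Aq d) * Sm k (Aq v) := by
        rw [Aq_mul]; exact Sm_mul k (Aq d) (Aq v) (Aq_ne v hv)
      have r : Sm k (Aq (u * v)) = Sm k (Aq v) * Sm k (Aq u) := by
        rw [Aq_mul]; exact Sm_mul k (Aq v) (Aq u) (Aq_ne u hune)
      rw [← l, ← r, hvd]
    have ea : Sm k (Aq (star v)) * Sm k (Aq v) = (((normSq v : ℝ):ℂ)^k) • 1 := by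
      have : Sm k (Aq (v * star v)) = Sm k (Aq (star v)) * Sm k (Aq v) := by
        rw [Aq_mul]; exact Sm_mul k (Aq (star v)) (Aq v) (Aq_ne v hv)
      rw [← this, Quaternion.self_mul_star, Sm_real]
    have eb : Sm k (Aq v) * Sm k (Aq (star v)) = (((normSq v : ℝ):ℂ)^k) • 1 := by
      have hsv : star v ≠ 0 := star_ne_zero.mpr hv
      have : Sm k (Aq (star v * v)) = Sm k (Aq v) * Sm k (Aq (star v)) := by
        rw [Aq_mul]; exact Sm_mul k (Aq v) (Aq (star v)) (Aq_ne (star v) hsv)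
      rw [← this, Quaternion.star_mul_self, Sm_real]
    have hnv : (((normSq v : ℝ):ℂ))^k ≠ 0 := by
      apply pow_ne_zero
      simp only [ne_eq, Complex.ofReal_eq_zero]
      exact normSq_ne_zero.mpr hv
    have key : (((normSq v : ℝ):ℂ))^k * Matrix.trace (Sm k (Aq u))
        = (((normSq v : ℝ):ℂ))^k * Matrix.trace (Sm k (Aq d)) := by
      calc (((normSq v : ℝ):ℂ))^k * Matrix.trace (Sm k (Aq u))
          = Matrix.trace ((((normSq v : ℝ):ℂ)^k • 1) * Sm k (Aq u)) := by
            rw [Matrix.smul_mul, Matrix.one_mul, Matrix.trace_smul]; simp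
        _ = Matrix.trace (Sm k (Aq (star v)) * Sm k (Aq v) * Sm k (Aq u)) := by rw [ea]
        _ = Matrix.trace (Sm k (Aq (star v)) * (Sm k (Aq v) * Sm k (Aq u))) := by
            rw [Matrix.mul_assoc]
        _ = Matrix.trace (Sm k (Aq (star v)) * (Sm k (Aq d) * Sm k (Aq v))) := by rw [← e1]
        _ = Matrix.trace (Sm k (Aq v) * Sm k (Aq (star v)) * Sm k (Aq d)) := by
            rw [← Matrix.mul_assoc]
            rw [Matrix.trace_mul_cycle]
        _ = Matrix.trace ((((normSq v : ℝ):ℂ)^k • 1) * Sm k (Aq d)) := by rw [eb]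
        _ = (((normSq v : ℝ):ℂ))^k * Matrix.trace (Sm k (Aq d)) := by
            rw [Matrix.smul_mul, Matrix.one_mul, Matrix.trace_smul]; simp
    have hcan := mul_left_cancel₀ hnv key
    rw [hcan]
    have : d.re = u.re := rfl
    rw [trace_Sm_diag k d rfl rfl (by simpa using hcs)]

lemma sum_myU_nonneg (k : ℕ) {M : ℕ} (q : Fin M → ℍ[ℝ]) (hq : ∀ i, normSq (q i) = 1) :
    0 ≤ ∑ i, ∑ j, myU k ((q i * star (q j)).re) := by
  classical
  set G : Fin M → Matrix (Fin (k+1)) (Fin (k+1)) ℂ := fun i => Sm k (Aq (q i)) with hG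
  set r : Fin (k+1) → Fin (k+1) → ℝ :=
    fun a b => (k.choose (b:ℕ) : ℝ) / (k.choose (a:ℕ) : ℝ) with hr
  have hqne : ∀ i, q i ≠ 0 := by
    intro i h
    have := hq i
    rw [h] at this; simp at this
  have hstar : ∀ (p : ℍ[ℝ]) (a b : Fin (k+1)),
      Sm k (Aq (star p)) a b = ((r a b : ℝ) : ℂ) * (starRingEnd ℂ) (Sm k (Aq p) b a) := by
    intro p a b
    rw [Aq_star]
    set N := (Aq p).map (starRingEnd ℂ) with hN
    have ht := Sm_transpose k N b a
    have hca : (k.choose (a:ℕ) : ℂ) ≠ 0 :=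
      Nat.cast_ne_zero.mpr (Nat.choose_pos (Nat.lt_succ_iff.mp a.isLt)).ne'
    have h2 : Sm k N.transpose a b
        = ((k.choose (b:ℕ) : ℂ) * Sm k N b a) / (k.choose (a:ℕ) : ℂ) := by
      rw [eq_div_iff hca]; linear_combination -ht
    rw [h2, Sm_conj k (Aq p) b a]
    rw [hr]
    push_cast
    ring
  -- each pair (i,j) : the character value
  have key : ∀ i j, ((myU k ((q i * star (q j)).re) : ℝ) : ℂ)
      = ∑ a : Fin (k+1), ∑ b : Fin (k+1),
          ((r a b : ℝ) : ℂ) * ((starRingEnd ℂ) (G j b a) * G i b a) := by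
    intro i j
    have hu : normSq (q i * star (q j)) = 1 := by
      rw [_root_.map_mul, normSq_star, hq i, hq j, one_mul]
    rw [← chi_eq k _ hu]
    have hAm : Sm k (Aq (q i * star (q j))) = Sm k (Aq (star (q j))) * Sm k (Aq (q i)) := by
      rw [Aq_mul]
      exact Sm_mul k (Aq (star (q j))) (Aq (q i)) (Aq_ne (q i) (hqne i))
    rw [hAm, Matrix.trace]
    calc ∑ a, Matrix.diag (Sm k (Aq (star (q j))) * Sm k (Aq (q i))) a
        = ∑ a : Fin (k+1), ∑ b : Fin (k+1), Sm k (Aq (star (q j))) a b * G i b a := by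
          apply Finset.sum_congr rfl; intro a _
          rw [Matrix.diag_apply, Matrix.mul_apply]
      _ = _ := by
          apply Finset.sum_congr rfl; intro a _
          apply Finset.sum_congr rfl; intro b _
          rw [hstar (q j) a b]
          ring
  -- total sum
  have total : ((∑ i, ∑ j, myU k ((q i * star (q j)).re) : ℝ) : ℂ)
      = ((∑ a : Fin (k+1), ∑ b : Fin (k+1),
          r a b * Complex.normSq (∑ i, G i b a) : ℝ) : ℂ) := by
    push_cast
    calc ∑ i, ∑ j, ((myU k ((q i * star (q j)).re) : ℝ) : ℂ)
        = ∑ i, ∑ j, ∑ a : Fin (k+1), ∑ b : Fin (k+1),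
            ((r a b : ℝ) : ℂ) * ((starRingEnd ℂ) (G j b a) * G i b a) := by
          apply Finset.sum_congr rfl; intro i _
          apply Finset.sum_congr rfl; intro j _
          exact key i j
      _ = ∑ i, ∑ a : Fin (k+1), ∑ j, ∑ b : Fin (k+1),
            ((r a b : ℝ) : ℂ) * ((starRingEnd ℂ) (G j b a) * G i b a) := by
          apply Finset.sum_congr rfl; intro i _
          exact Finset.sum_comm
      _ = ∑ a : Fin (k+1), ∑ i, ∑ j, ∑ b : Fin (k+1),
            ((r a b : ℝ) : ℂ) * ((starRingEnd ℂ) (G j b a) * G i b a) := by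
          exact Finset.sum_comm
      _ = ∑ a : Fin (k+1), ∑ i, ∑ b : Fin (k+1), ∑ j,
            ((r a b : ℝ) : ℂ) * ((starRingEnd ℂ) (G j b a) * G i b a) := by
          apply Finset.sum_congr rfl; intro a _
          apply Finset.sum_congr rfl; intro i _
          exact Finset.sum_comm
      _ = ∑ a : Fin (k+1), ∑ b : Fin (k+1), ∑ i, ∑ j,
            ((r a b : ℝ) : ℂ) * ((starRingEnd ℂ) (G j b a) * G i b a) := by
          apply Finset.sum_congr rfl; intro a _
          exact Finset.sum_comm
      _ = ∑ a : Fin (k+1), ∑ b : Fin (k+1),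
            ((r a b : ℝ) : ℂ) * ((starRingEnd ℂ) (∑ j, G j b a) * (∑ i, G i b a)) := by
          apply Finset.sum_congr rfl; intro a _
          apply Finset.sum_congr rfl; intro b _
          rw [map_sum]
          calc ∑ i, ∑ j, ((r a b : ℝ) : ℂ) * ((starRingEnd ℂ) (G j b a) * G i b a)
              = ∑ i, ((r a b : ℝ) : ℂ) * ((∑ j, (starRingEnd ℂ) (G j b a)) * G i b a) := by
                apply Finset.sum_congr rfl; intro i _
                rw [← Finset.mul_sum]
                congr 1
                rw [← Finset.sum_mul]
            _ = ((r a b : ℝ) : ℂ) * ((∑ j, (starRingEnd ℂ) (G j b a)) * (∑ i, G i b a)) := by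
                rw [← Finset.mul_sum]
                congr 1
                rw [← Finset.mul_sum]
      _ = ∑ a : Fin (k+1), ∑ b : Fin (k+1),
            ((r a b : ℝ) : ℂ) * ((Complex.normSq (∑ i, G i b a) : ℝ) : ℂ) := by
          apply Finset.sum_congr rfl; intro a _
          apply Finset.sum_congr rfl; intro b _
          congr 1
          rw [mul_comm]
          exact Complex.mul_conj _
  have treal : (∑ i, ∑ j, myU k ((q i * star (q j)).re) : ℝ)
      = ∑ a : Fin (k+1), ∑ b : Fin (k+1), r a b * Complex.normSq (∑ i, G i b a) :=
    Complex.ofReal_inj.mp total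
  rw [treal]
  apply Finset.sum_nonneg; intro a _
  apply Finset.sum_nonneg; intro b _
  apply mul_nonneg
  · apply div_nonneg <;> positivity
  · exact Complex.normSq_nonneg _

noncomputable def qOf (v : EuclideanSpace ℝ (Fin 4)) : ℍ[ℝ] := ⟨v 0, v 1, v 2, v 3⟩

lemma qOf_inner (x y : EuclideanSpace ℝ (Fin 4)) :
    ⟪x, y⟫ = (qOf x * star (qOf y)).re := by
  have : ⟪x, y⟫ = ∑ i, x i * y i := by
    simp [PiLp.inner_apply, RCLike.inner_apply, starRingEnd_apply, mul_comm]
  rw [this, Fin.sum_univ_four]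
  rw [Quaternion.re_mul, Quaternion.re_star, Quaternion.imI_star, Quaternion.imJ_star,
    Quaternion.imK_star]; simp only [qOf]
  ring

lemma qOf_normSq (x : EuclideanSpace ℝ (Fin 4)) (hx : ‖x‖ = 1) : normSq (qOf x) = 1 := by
  rw [Quaternion.normSq_def']
  have h := EuclideanSpace.norm_eq x
  rw [hx] at h
  have h2 : ∑ i, ‖x i‖ ^ 2 = 1 := by
    have hnn : (0:ℝ) ≤ ∑ i, ‖x i‖ ^ 2 := by positivity
    nlinarith [Real.sq_sqrt hnn, h.symm]
  rw [Fin.sum_univ_four] at h2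
  simp only [Real.norm_eq_abs, sq_abs] at h2
  simpa [qOf] using h2

/-- For any finite set of points `x_1, …, x_M` on the unit sphere `S³ ⊂ ℝ⁴`,
`S(X) = ∑_{i,j} f_4(⟨x_i,x_j⟩) ≥ M²`. -/
theorem f4_sum_ge_sq (M : ℕ) (x : Fin M → EuclideanSpace ℝ (Fin 4))
    (hx : ∀ i, ‖x i‖ = 1) :
    (M : ℝ) ^ 2 ≤ ∑ i, ∑ j, f4 ⟪x i, x j⟫ := by
  classical
  set q : Fin M → ℍ[ℝ] := fun i => qOf (x i) with hqdef
  have hq : ∀ i, normSq (q i) = 1 := fun i => qOf_normSq (x i) (hx i)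
  set r : Fin M → Fin M → ℝ := fun i j => (q i * star (q j)).re with hrdef
  have hf : ∀ i j, f4 ⟪x i, x j⟫
      = 1 + (myU 1 (r i j) + (51/25) * myU 2 (r i j) + (871/1000) * myU 3 (r i j)
        + (128/125) * myU 4 (r i j) + (21/200) * myU 9 (r i j)) := by
    intro i j
    rw [qOf_inner (x i) (x j)]
    have : (qOf (x i) * star (qOf (x j))).re = r i j := rfl
    rw [this]
    show f4 (r i j) = _
    simp only [f4, myU]
    ring
  have h1 := sum_myU_nonneg 1 q hq
  have h2 := sum_myU_nonneg 2 q hq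
  have h3 := sum_myU_nonneg 3 q hq
  have h4 := sum_myU_nonneg 4 q hq
  have h9 := sum_myU_nonneg 9 q hq
  have heq : ∑ i, ∑ j, f4 ⟪x i, x j⟫
      = (M:ℝ)^2 + ((∑ i, ∑ j, myU 1 (r i j)) + (51/25) * (∑ i, ∑ j, myU 2 (r i j))
        + (871/1000) * (∑ i, ∑ j, myU 3 (r i j)) + (128/125) * (∑ i, ∑ j, myU 4 (r i j))
        + (21/200) * (∑ i, ∑ j, myU 9 (r i j))) := by
    rw [Finset.sum_congr rfl (fun i _ => Finset.sum_congr rfl (fun j _ => hf i j))]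
    simp only [Finset.sum_add_distrib, Finset.sum_const, Finset.card_univ, Fintype.card_fin,
      nsmul_eq_mul, mul_one, ← Finset.mul_sum]
    ring
  rw [heq]
  have e1 : 0 ≤ ∑ i, ∑ j, myU 1 (r i j) := h1
  have e2 : 0 ≤ ∑ i, ∑ j, myU 2 (r i j) := h2
  have e3 : 0 ≤ ∑ i, ∑ j, myU 3 (r i j) := h3
  have e4 : 0 ≤ ∑ i, ∑ j, myU 4 (r i j) := h4
  have e9 : 0 ≤ ∑ i, ∑ j, myU 9 (r i j) := h9
  linarith
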